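/- Let 0 < p < 1, let (α_k)_{k≥0} be a strictly increasing sequence of positive integers, and let (β_k)_{k≥0} be nonnegative reals with Σ_k β_k^p < ∞. For each k set a_k := (M_{α_k}^{1/p−1}/λ) · (D_{M_{α_k+1}} − D_{M_{α_k}}), where λ = sup_k m_k. Then the sequence f = (f^{(A)})_{A≥0} defined by f^{(A)} := Σ_{{k : α_k < A}} β_k a_k is a martingale with respect to the filtration (F_A), it satisfies S_{M_A} a_k = a_k if α_k < A and S_{M_A} a_k = 0 if α_k ≥ A, and f belongs to the martingale Hardy space H_p(G_m), i.e. ‖sup_A |f^{(A)}|‖_{L^p(μ)} < ∞. -/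

import Mathlib

open MeasureTheory Filter ENNReal Finset

noncomputable section

/-- The Vilenkin group `G_m`: complete direct product of cyclic groups `ℤ_{m_k}`. -/
abbrev Gm (m : ℕ → ℕ) : Type := ∀ k : ℕ, ZMod (m k)

/-- The generalized powers `M_0 = 1`, `M_{k+1} = m_k M_k`. -/
def Mgen (m : ℕ → ℕ) : ℕ → ℕ
  | 0 => 1
  | k + 1 => m k * Mgen m k

/-- The digits of `n` in the generalized number system `n = Σ_j n_j M_j`. -/
def digit (m : ℕ → ℕ) (n j : ℕ) : ℕ := (n / Mgen m j) % m j

/-- The generalized Rademacher functions `r_k(x) = exp(2πi x_k / m_k)`. -/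
def rade (m : ℕ → ℕ) (k : ℕ) (x : Gm m) : ℂ :=
  Complex.exp (2 * Real.pi * Complex.I * ((x k).val : ℂ) / (m k : ℂ))

/-- The Vilenkin system `ψ_n = Π_k r_k^{n_k}` (all digits `n_k` with `k > n` vanish). -/
def psi (m : ℕ → ℕ) (n : ℕ) (x : Gm m) : ℂ :=
  ∏ k ∈ Finset.range (n + 1), rade m k x ^ digit m n k

/-- The cylinder `I_n(x) = {y : y_0 = x_0, ..., y_{n-1} = x_{n-1}}`. -/
def cyl (m : ℕ → ℕ) (n : ℕ) (x : Gm m) : Set (Gm m) := {y | ∀ j < n, y j = x j}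

/-- Vilenkin–Fourier coefficient of an integrable function. -/
def fcoef (m : ℕ → ℕ) (μ : Measure (Gm m)) (f : Gm m → ℂ) (k : ℕ) : ℂ :=
  ∫ x, f x * (starRingEnd ℂ) (psi m k x) ∂μ

/-- Partial sums of the Vilenkin–Fourier series of a function. -/
def Spart (m : ℕ → ℕ) (μ : Measure (Gm m)) (f : Gm m → ℂ) (n : ℕ) (x : Gm m) : ℂ :=
  ∑ k ∈ Finset.range n, fcoef m μ f k * psi m k x

/-- The Dirichlet kernels `D_n = Σ_{k<n} ψ_k`. -/
def Dker (m : ℕ → ℕ) (n : ℕ) (x : Gm m) : ℂ :=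
  ∑ k ∈ Finset.range n, psi m k x

/-- `f = (f^{(n)})` is a martingale w.r.t. the filtration generated by the cylinders:
each `f^{(n)}` is integrable and, for `n ≤ k`, the conditional expectation of `f^{(k)}`
on the `n`-th σ-algebra (the average on each cylinder `I_n(x)`) equals `f^{(n)}`. -/
def IsVMartingale (m : ℕ → ℕ) (μ : Measure (Gm m)) (f : ℕ → Gm m → ℂ) : Prop :=
  (∀ n, Integrable (f n) μ) ∧
  ∀ n k : ℕ, n ≤ k → ∀ x : Gm m, f n x = (Mgen m n : ℂ) * ∫ t in cyl m n x, f k t ∂μ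

/-- Vilenkin–Fourier coefficient of a martingale: `lim_k ∫ f^{(k)} ψ̄_i dμ`; since the
integral is independent of `k` once `M_k > i`, and `M_{i+1} > i`, we take `k = i+1`. -/
def mfhat (m : ℕ → ℕ) (μ : Measure (Gm m)) (f : ℕ → Gm m → ℂ) (i : ℕ) : ℂ :=
  ∫ x, f (i + 1) x * (starRingEnd ℂ) (psi m i x) ∂μ

/-- The `H_p` (quasi-)norm of a martingale: `‖sup_n |f^{(n)}|‖_{L^p(μ)}`, as an `ℝ≥0∞`. -/
def HpNorm (m : ℕ → ℕ) (μ : Measure (Gm m)) (p : ℝ) (f : ℕ → Gm m → ℂ) : ℝ≥0∞ :=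
  (∫⁻ x, (⨆ n, (‖f n x‖₊ : ℝ≥0∞)) ^ p ∂μ) ^ (1 / p)

section Arith
variable {m : ℕ → ℕ}

lemma Mgen_succ (k : ℕ) : Mgen m (k + 1) = m k * Mgen m k := rfl

lemma Mgen_zero : Mgen m 0 = 1 := rfl

lemma Mgen_pos (hm : ∀ k, 2 ≤ m k) (k : ℕ) : 0 < Mgen m k := by
  induction k with
  | zero => exact Nat.one_pos
  | succ k ih => have := hm k; exact Nat.mul_pos (by omega) ih

lemma Mgen_strictMono (hm : ∀ k, 2 ≤ m k) : StrictMono (Mgen m) := by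
  apply strictMono_nat_of_lt_succ
  intro k
  have h1 := Mgen_pos hm k
  have h2 := hm k
  have : 1 * Mgen m k < m k * Mgen m k :=
    Nat.mul_lt_mul_of_lt_of_le (by omega) le_rfl h1
  simpa [Mgen_succ] using this

lemma Mgen_mono (hm : ∀ k, 2 ≤ m k) : Monotone (Mgen m) := (Mgen_strictMono hm).monotone

lemma lt_Mgen (hm : ∀ k, 2 ≤ m k) (k : ℕ) : k < Mgen m k := by
  induction k with
  | zero => exact Nat.one_pos
  | succ k ih =>
    have h2 := hm k
    have : 2 * Mgen m k ≤ m k * Mgen m k := Nat.mul_le_mul_right _ h2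
    rw [Mgen_succ]; omega

lemma digit_lt (hm : ∀ k, 2 ≤ m k) (n j : ℕ) : digit m n j < m j :=
  Nat.mod_lt _ (by have := hm j; omega)

lemma digit_eq_zero_of_lt {n j : ℕ} (h : n < Mgen m j) : digit m n j = 0 := by
  simp [digit, Nat.div_eq_of_lt h]

lemma Mgen_succ_dvd {j n : ℕ} (h : j < n) : m j * Mgen m j ∣ Mgen m n := by
  induction n with
  | zero => omega
  | succ n ih =>
    rcases Nat.lt_succ_iff_lt_or_eq.1 h with h' | h'
    · exact (ih h').mul_left _
    · subst h'; exact dvd_refl _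

lemma digit_add_mul (hm : ∀ k, 2 ≤ m k) {r d n : ℕ} (hr : r < Mgen m n) (hd : d < m n) (j : ℕ) :
    digit m (r + d * Mgen m n) j =
      if j < n then digit m r j else if j = n then d else 0 := by
  rcases lt_trichotomy j n with h | h | h
  · obtain ⟨t, ht⟩ := Mgen_succ_dvd (m := m) h
    rw [if_pos h]
    unfold digit
    have hMj := Mgen_pos hm j
    have h1 : r + d * Mgen m n = r + (d * t * m j) * Mgen m j := by rw [ht]; ring
    rw [h1, Nat.add_mul_div_right _ _ hMj]
    have h2 : r / Mgen m j + d * t * m j = r / Mgen m j + (d * t) * m j := by ring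
    rw [h2, Nat.add_mul_mod_self_right]
  · subst h
    rw [if_neg (lt_irrefl _), if_pos rfl]
    unfold digit
    have hMn := Mgen_pos hm j
    rw [Nat.add_mul_div_right _ _ hMn, Nat.div_eq_of_lt hr, Nat.zero_add, Nat.mod_eq_of_lt hd]
  · have hlt : r + d * Mgen m n < Mgen m j := by
      have h1 : r + d * Mgen m n < (d + 1) * Mgen m n := by
        have := Mgen_pos hm n; nlinarith
      have h2 : (d + 1) * Mgen m n ≤ m n * Mgen m n := Nat.mul_le_mul_right _ (by omega)
      have h3 : Mgen m (n + 1) ≤ Mgen m j := Mgen_mono hm h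
      rw [Mgen_succ] at h3
      omega
    rw [digit_eq_zero_of_lt hlt, if_neg (by omega), if_neg (by omega)]

lemma sum_digits (hm : ∀ k, 2 ≤ m k) :
    ∀ T n, n < Mgen m T → ∑ k ∈ Finset.range T, digit m n k * Mgen m k = n := by
  intro T
  induction T with
  | zero => intro n hn; rw [Mgen_zero] at hn; interval_cases n; simp
  | succ T ih =>
    intro n hn
    have hMT := Mgen_pos hm T
    have hrlt : n % Mgen m T < Mgen m T := Nat.mod_lt _ hMT
    have hqlt : n / Mgen m T < m T := by
      rw [Nat.div_lt_iff_lt_mul hMT]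
      rw [Mgen_succ] at hn
      omega
    have hn' : n = n % Mgen m T + (n / Mgen m T) * Mgen m T := (Nat.mod_add_div' n _).symm
    have hd : ∀ k, k < T → digit m n k = digit m (n % Mgen m T) k := by
      intro k hk
      conv_lhs => rw [hn']
      rw [digit_add_mul hm hrlt hqlt, if_pos hk]
    have hdT : digit m n T = n / Mgen m T := by
      conv_lhs => rw [hn']
      rw [digit_add_mul hm hrlt hqlt, if_neg (lt_irrefl _), if_pos rfl]
    rw [Finset.sum_range_succ, hdT,
      Finset.sum_congr rfl (fun k hk => by rw [hd k (Finset.mem_range.1 hk)]),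
      ih _ hrlt]
    omega

lemma digit_inj (hm : ∀ k, 2 ≤ m k) {T i j : ℕ} (hi : i < Mgen m T) (hj : j < Mgen m T)
    (h : ∀ k < T, digit m i k = digit m j k) : i = j := by
  rw [← sum_digits hm T i hi, ← sum_digits hm T j hj]
  exact Finset.sum_congr rfl fun k hk => by rw [h k (Finset.mem_range.1 hk)]

end Arith

section Rade
variable {m : ℕ → ℕ}

lemma rade_eq (k : ℕ) (x : Gm m) :
    rade m k x = Complex.exp (((2 * Real.pi * (x k).val / m k : ℝ) : ℂ) * Complex.I) := by
  unfold rade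
  congr 1
  push_cast
  ring

lemma norm_rade (k : ℕ) (x : Gm m) : ‖rade m k x‖ = 1 := by
  rw [rade_eq, Complex.norm_exp_ofReal_mul_I]

lemma rade_ne_zero (k : ℕ) (x : Gm m) : rade m k x ≠ 0 := Complex.exp_ne_zero _

/-- core geometric sum -/
lemma expsum (M V : ℕ) (hM : 0 < M) :
    ∑ v ∈ Finset.range M, Complex.exp (2 * Real.pi * Complex.I * (V : ℂ) / (M : ℂ)) ^ v
      = if M ∣ V then (M : ℂ) else 0 := by
  have hMC : (M : ℂ) ≠ 0 := Nat.cast_ne_zero.2 hM.ne'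
  have hpi : (Real.pi : ℂ) ≠ 0 := Complex.ofReal_ne_zero.2 Real.pi_ne_zero
  set ω := Complex.exp (2 * Real.pi * Complex.I * (V : ℂ) / (M : ℂ)) with hω
  have hωM : ω ^ M = 1 := by
    rw [hω, ← Complex.exp_nat_mul]
    have : (M : ℂ) * (2 * Real.pi * Complex.I * (V : ℂ) / (M : ℂ)) = (V : ℤ) * (2 * Real.pi * Complex.I) := by
      field_simp
      push_cast; ring
    rw [this, Complex.exp_int_mul_two_pi_mul_I]
  by_cases hdvd : M ∣ V
  · rw [if_pos hdvd]
    obtain ⟨c, hc⟩ := hdvd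
    have hω1 : ω = 1 := by
      rw [hω, hc]
      have : 2 * Real.pi * Complex.I * ((M * c : ℕ) : ℂ) / (M : ℂ)
          = (c : ℤ) * (2 * Real.pi * Complex.I) := by
        push_cast
        field_simp
      rw [this, Complex.exp_int_mul_two_pi_mul_I]
    simp [hω1]
  · rw [if_neg hdvd]
    have hω1 : ω ≠ 1 := by
      intro h
      rw [hω, Complex.exp_eq_one_iff] at h
      obtain ⟨n, hn⟩ := h
      have h2 : (2 * (Real.pi : ℂ) * Complex.I : ℂ) ≠ 0 :=
        mul_ne_zero (mul_ne_zero two_ne_zero hpi) Complex.I_ne_zero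
      have hV : (V : ℂ) = (n : ℂ) * M := by
        apply mul_left_cancel₀ h2
        have h3 := congrArg (fun z => z * (M : ℂ)) hn
        rw [div_mul_cancel₀ _ hMC] at h3
        calc 2 * (Real.pi : ℂ) * Complex.I * V = 2 * ↑Real.pi * Complex.I * ↑V := by ring
          _ = ↑n * (2 * ↑Real.pi * Complex.I) * M := h3
          _ = 2 * ↑Real.pi * Complex.I * (↑n * ↑M) := by ring
      have hVint : (V : ℤ) = n * M := by exact_mod_cast hV
      exact hdvd (Int.ofNat_dvd.mp ⟨n, by rw [hVint]; ring⟩)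
    rw [geom_sum_eq hω1, hωM]
    simp

lemma rade_pow (hm : ∀ k, 2 ≤ m k) (k : ℕ) (x : Gm m) : rade m k x ^ (m k) = 1 := by
  unfold rade
  rw [← Complex.exp_nat_mul]
  have hmc : (m k : ℂ) ≠ 0 := Nat.cast_ne_zero.2 (by have := hm k; omega)
  have : (m k : ℂ) * (2 * Real.pi * Complex.I * ((x k).val : ℂ) / (m k : ℂ))
      = ((x k).val : ℤ) * (2 * Real.pi * Complex.I) := by
    field_simp
    push_cast; ring
  rw [this, Complex.exp_int_mul_two_pi_mul_I]

lemma conj_rade (hm : ∀ k, 2 ≤ m k) (k : ℕ) (x : Gm m) :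
    (starRingEnd ℂ) (rade m k x) = rade m k x ^ (m k - 1) := by
  have h1 : rade m k x ^ (m k - 1) * rade m k x = 1 := by
    rw [← pow_succ]
    have : m k - 1 + 1 = m k := by have := hm k; omega
    rw [this, rade_pow hm]
  have h2 : (starRingEnd ℂ) (rade m k x) * rade m k x = 1 := by
    rw [mul_comm, Complex.mul_conj', norm_rade]
    norm_num
  calc (starRingEnd ℂ) (rade m k x)
      = (starRingEnd ℂ) (rade m k x) * (rade m k x ^ (m k - 1) * rade m k x) := by
        rw [h1, mul_one]
    _ = ((starRingEnd ℂ) (rade m k x) * rade m k x) * rade m k x ^ (m k - 1) := by ring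
    _ = rade m k x ^ (m k - 1) := by rw [h2, one_mul]

/-- character sum over `ZMod (m n)` -/
lemma zmod_charsum (hm : ∀ k, 2 ≤ m k) (n e : ℕ) [NeZero (m n)] :
    ∑ c : ZMod (m n), Complex.exp (2 * Real.pi * Complex.I * ((c.val : ℕ) : ℂ) / (m n : ℂ)) ^ e
      = if m n ∣ e then (m n : ℂ) else 0 := by
  have h1 : ∀ c : ZMod (m n),
      Complex.exp (2 * Real.pi * Complex.I * ((c.val : ℕ) : ℂ) / (m n : ℂ)) ^ e
        = Complex.exp (2 * Real.pi * Complex.I * (e : ℂ) / (m n : ℂ)) ^ (c.val) := by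
    intro c
    rw [← Complex.exp_nat_mul, ← Complex.exp_nat_mul]
    congr 1
    ring
  rw [Finset.sum_congr rfl (fun c _ => h1 c)]
  rw [← expsum (m n) e (by have := hm n; omega)]
  refine Finset.sum_nbij' (i := fun c => c.val) (j := fun v => (v : ZMod (m n)))
    ?_ ?_ ?_ ?_ ?_
  · intro c _
    exact Finset.mem_range.2 (ZMod.val_lt c)
  · intro v _
    exact Finset.mem_univ _
  · intro c _
    exact ZMod.natCast_rightInverse c
  · intro v hv
    exact ZMod.val_cast_of_lt (Finset.mem_range.1 hv)
  · intro c _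
    rfl

end Rade

section Psi
variable {m : ℕ → ℕ}

lemma psi_eq_prod (hm : ∀ k, 2 ≤ m k) {n T : ℕ} (h : n < Mgen m T) (x : Gm m) :
    psi m n x = ∏ k ∈ Finset.range T, rade m k x ^ digit m n k := by
  unfold psi
  rcases le_total (n + 1) T with hT | hT
  · apply Finset.prod_subset (Finset.range_subset_range.2 hT)
    intro k hk hk'
    simp only [Finset.mem_range] at hk hk'
    have hk2 : n < k := by omega
    have : n < Mgen m k := lt_of_lt_of_le hk2 (le_of_lt (lt_Mgen hm k))
    rw [digit_eq_zero_of_lt this, pow_zero]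
  · symm
    apply Finset.prod_subset (Finset.range_subset_range.2 hT)
    intro k hk hk'
    simp only [Finset.mem_range] at hk hk'
    have : Mgen m T ≤ Mgen m k := Mgen_mono hm (by omega)
    rw [digit_eq_zero_of_lt (lt_of_lt_of_le h this), pow_zero]

lemma norm_psi (n : ℕ) (x : Gm m) : ‖psi m n x‖ = 1 := by
  unfold psi
  rw [norm_prod]
  apply Finset.prod_eq_one
  intro k _
  rw [norm_pow, norm_rade, one_pow]

lemma psi_ne_top_lt (hm : ∀ k, 2 ≤ m k) {i n : ℕ} (h : i < Mgen m n) (x y : Gm m)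
    (hxy : ∀ j < n, y j = x j) : psi m i y = psi m i x := by
  rw [psi_eq_prod hm h, psi_eq_prod hm h]
  apply Finset.prod_congr rfl
  intro k hk
  unfold rade
  rw [hxy k (Finset.mem_range.1 hk)]

lemma psi_add_mul (hm : ∀ k, 2 ≤ m k) {r d n : ℕ} (hr : r < Mgen m n) (hd : d < m n)
    (x : Gm m) : psi m (r + d * Mgen m n) x = psi m r x * rade m n x ^ d := by
  have hlt : r + d * Mgen m n < Mgen m (n + 1) := by
    rw [Mgen_succ]
    have h1 : r + d * Mgen m n < (d + 1) * Mgen m n := by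
      have := Mgen_pos hm n; nlinarith
    have h2 : (d + 1) * Mgen m n ≤ m n * Mgen m n := Nat.mul_le_mul_right _ (by omega)
    omega
  rw [psi_eq_prod hm hlt x, psi_eq_prod hm hr x, Finset.prod_range_succ,
      digit_add_mul hm hr hd n, if_neg (lt_irrefl _), if_pos rfl]
  congr 1
  apply Finset.prod_congr rfl
  intro k hk
  rw [digit_add_mul hm hr hd k, if_pos (Finset.mem_range.1 hk)]

lemma radesum (hm : ∀ k, 2 ≤ m k) (n : ℕ) (x : Gm m) :
    ∑ d ∈ Finset.range (m n), rade m n x ^ d = if x n = 0 then (m n : ℂ) else 0 := by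
  haveI : NeZero (m n) := ⟨by have := hm n; omega⟩
  unfold rade
  rw [expsum (m n) (x n).val (by have := hm n; omega)]
  congr 1
  rw [eq_iff_iff]
  constructor
  · intro hdvd
    have := ZMod.val_lt (x n)
    exact (ZMod.val_eq_zero _).1 (Nat.eq_zero_of_dvd_of_lt hdvd this)
  · intro h0
    rw [h0]
    simp [ZMod.val_zero]

lemma Dker_Mgen_succ (hm : ∀ k, 2 ≤ m k) (n : ℕ) (x : Gm m) :
    Dker m (Mgen m (n + 1)) x = Dker m (Mgen m n) x * ∑ d ∈ Finset.range (m n), rade m n x ^ d := by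
  unfold Dker
  rw [Mgen_succ]
  have key : ∑ i ∈ Finset.range (m n * Mgen m n), psi m i x
      = ∑ dr ∈ Finset.range (m n) ×ˢ Finset.range (Mgen m n), psi m (dr.2 + dr.1 * Mgen m n) x := by
    have hM := Mgen_pos hm n
    refine Finset.sum_nbij' (i := fun i => (i / Mgen m n, i % Mgen m n))
      (j := fun dr => dr.2 + dr.1 * Mgen m n) ?_ ?_ ?_ ?_ ?_
    · intro i hi
      simp only [Finset.mem_range, Finset.mem_product] at hi ⊢
      exact ⟨(Nat.div_lt_iff_lt_mul hM).2 (by omega), Nat.mod_lt _ hM⟩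
    · intro dr hdr
      simp only [Finset.mem_range, Finset.mem_product] at hdr ⊢
      have h1 : dr.2 + dr.1 * Mgen m n < (dr.1 + 1) * Mgen m n := by nlinarith [hdr.1, hdr.2]
      have h2 : (dr.1 + 1) * Mgen m n ≤ m n * Mgen m n := Nat.mul_le_mul_right _ (by omega)
      omega
    · intro i _
      simp only
      exact Nat.mod_add_div' i (Mgen m n)
    · intro dr hdr
      simp only [Finset.mem_range, Finset.mem_product] at hdr
      have h1 : (dr.2 + dr.1 * Mgen m n) / Mgen m n = dr.1 := by
        rw [Nat.add_mul_div_right _ _ hM, Nat.div_eq_of_lt hdr.2, Nat.zero_add]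
      have h2 : (dr.2 + dr.1 * Mgen m n) % Mgen m n = dr.2 := by
        rw [Nat.add_mul_mod_self_right, Nat.mod_eq_of_lt hdr.2]
      show ((dr.2 + dr.1 * Mgen m n) / Mgen m n, (dr.2 + dr.1 * Mgen m n) % Mgen m n) = dr
      rw [h1, h2]
    · intro i _
      simp only
      rw [Nat.mod_add_div' i (Mgen m n)]
  rw [key, Finset.sum_product]
  rw [Finset.sum_congr rfl (fun d hd => Finset.sum_congr rfl (fun r hr =>
    psi_add_mul hm (Finset.mem_range.1 hr) (Finset.mem_range.1 hd) x))]
  rw [Finset.mul_sum]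
  apply Finset.sum_congr rfl
  intro d _
  rw [← Finset.sum_mul]

lemma Dker_Mgen (hm : ∀ k, 2 ≤ m k) (n : ℕ) (x : Gm m) :
    Dker m (Mgen m n) x = if (∀ j < n, x j = 0) then (Mgen m n : ℂ) else 0 := by
  induction n with
  | zero =>
    have : Dker m (Mgen m 0) x = psi m 0 x := by
      unfold Dker
      rw [Mgen_zero, Finset.sum_range_one]
    rw [this]
    unfold psi
    have : digit m 0 0 = 0 := by unfold digit; simp
    simp [this, Mgen_zero]
  | succ n ih =>
    rw [Dker_Mgen_succ hm, ih, radesum hm]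
    by_cases h1 : ∀ j < n, x j = 0
    · by_cases h2 : x n = 0
      · rw [if_pos h1, if_pos h2, if_pos (by intro j hj; rcases Nat.lt_succ_iff_lt_or_eq.1 hj with h | h; exacts [h1 j h, h ▸ h2])]
        rw [Mgen_succ]
        push_cast
        ring
      · rw [if_pos h1, if_neg h2, if_neg (show ¬(∀ j < n + 1, x j = 0) from
          fun h => h2 (h n (Nat.lt_succ_self n))), mul_zero]
    · rw [if_neg h1, if_neg (show ¬(∀ j < n + 1, x j = 0) from
        fun h => h1 (fun j hj => h j (Nat.lt_succ_of_lt hj))), zero_mul]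

end Psi


section MeasureCore
variable {m : ℕ → ℕ}

lemma measurable_rade (k : ℕ) : Measurable (rade m k) := by
  unfold rade
  have h1 : Measurable fun x : Gm m => x k := measurable_pi_apply k
  have h2 : Measurable fun c : ZMod (m k) =>
      Complex.exp (2 * Real.pi * Complex.I * ((c.val : ℕ) : ℂ) / (m k : ℂ)) :=
    Measurable.of_discrete
  exact h2.comp h1

lemma measurable_psi (n : ℕ) : Measurable (psi m n) := by
  unfold psi
  exact Finset.measurable_prod _ (fun k _ => (measurable_rade k).pow_const _)

lemma measurable_monomial (e : ℕ → ℕ) (T : ℕ) :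
    Measurable (fun y : Gm m => ∏ k ∈ Finset.range T, rade m k y ^ e k) :=
  Finset.measurable_prod _ (fun k _ => (measurable_rade k).pow_const _)

lemma norm_monomial_le (e : ℕ → ℕ) (T : ℕ) (y : Gm m) :
    ‖∏ k ∈ Finset.range T, rade m k y ^ e k‖ ≤ 1 := by
  rw [norm_prod]
  apply le_of_eq
  apply Finset.prod_eq_one
  intro k _
  rw [norm_pow, norm_rade, one_pow]

lemma measurableSet_cyl (n : ℕ) (x : Gm m) : MeasurableSet (cyl m n x) := by
  have : cyl m n x = ⋂ (j : ℕ) (_ : j < n), (fun y : Gm m => y j) ⁻¹' {x j} := by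
    ext y; simp [cyl]
  rw [this]
  exact MeasurableSet.iInter fun j => MeasurableSet.iInter fun _ =>
    (measurable_pi_apply j) (measurableSet_singleton _)

lemma cyl_zero (x : Gm m) : cyl m 0 x = Set.univ := by
  ext y; simp [cyl]

lemma cyl_succ_union (hm : ∀ k, 2 ≤ m k) (n : ℕ) (x : Gm m) :
    cyl m n x = ⋃ c : ZMod (m n), cyl m (n + 1) (Function.update x n c) := by
  ext y
  simp only [Set.mem_iUnion, cyl, Set.mem_setOf_eq]
  constructor
  · intro h
    refine ⟨y n, fun j hj => ?_⟩
    rcases Nat.lt_succ_iff_lt_or_eq.1 hj with h' | h'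
    · rw [Function.update_of_ne (by omega) _ _]
      exact h j h'
    · subst h'
      rw [Function.update_self]
  · rintro ⟨c, hc⟩ j hj
    have := hc j (Nat.lt_succ_of_lt hj)
    rwa [Function.update_of_ne (by omega) _ _] at this

lemma cyl_succ_disjoint (n : ℕ) (x : Gm m) :
    Pairwise (Function.onFun Disjoint
      (fun c : ZMod (m n) => cyl m (n + 1) (Function.update x n c))) := by
  intro c c' hne
  rw [Function.onFun, Set.disjoint_left]
  intro y hy hy'
  apply hne
  have h1 := hy n (Nat.lt_succ_self n)
  have h2 := hy' n (Nat.lt_succ_self n)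
  rw [Function.update_self] at h1 h2
  rw [← h1, ← h2]

variable (μ : Measure (Gm m))

lemma gm_isFiniteMeasure (hμ : ∀ n x, μ (cyl m n x) = ((Mgen m n : ℝ≥0∞))⁻¹) :
    IsFiniteMeasure μ := by
  constructor
  have : (Set.univ : Set (Gm m)) = cyl m 0 (fun k => 0) := (cyl_zero _).symm
  rw [this, hμ 0 _, Mgen_zero]
  simp

lemma integrable_bdd [IsFiniteMeasure μ] {g : Gm m → ℂ} (hg : Measurable g) (C : ℝ)
    (hC : ∀ x, ‖g x‖ ≤ C) : Integrable g μ :=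
  (integrable_const C).mono' hg.aestronglyMeasurable (Filter.Eventually.of_forall hC)

lemma integrable_psi [IsFiniteMeasure μ] (n : ℕ) : Integrable (psi m n) μ :=
  integrable_bdd μ (measurable_psi n) 1 (fun x => le_of_eq (norm_psi n x))

/-- The fundamental integral computation. -/
lemma setIntegral_monomial (hm : ∀ k, 2 ≤ m k)
    (hμ : ∀ n x, μ (cyl m n x) = ((Mgen m n : ℝ≥0∞))⁻¹) (e : ℕ → ℕ) (T : ℕ) :
    ∀ d n, n + d = T → ∀ x : Gm m,
      ∫ y in cyl m n x, (∏ k ∈ Finset.range T, rade m k y ^ e k) ∂μ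
        = (Mgen m n : ℂ)⁻¹ * ((∏ k ∈ Finset.range n, rade m k x ^ e k)
            * ∏ k ∈ Finset.Ico n T, (if m k ∣ e k then (1 : ℂ) else 0)) := by
  haveI := gm_isFiniteMeasure μ hμ
  intro d
  induction d with
  | zero =>
    intro n hn x
    subst hn
    rw [Nat.add_zero] at *
    have hconst : Set.EqOn (fun y : Gm m => ∏ k ∈ Finset.range n, rade m k y ^ e k)
        (fun _ => ∏ k ∈ Finset.range n, rade m k x ^ e k) (cyl m n x) := by
      intro y hy
      simp only
      apply Finset.prod_congr rfl
      intro k hk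
      unfold rade
      rw [hy k (Finset.mem_range.1 hk)]
    rw [setIntegral_congr_fun (measurableSet_cyl n x) hconst, setIntegral_const, measureReal_def, hμ n x]
    rw [Finset.Ico_self, Finset.prod_empty, mul_one]
    rw [ENNReal.toReal_inv, ENNReal.toReal_natCast, Complex.real_smul]
    push_cast
    ring
  | succ d ih =>
    intro n hn x
    have hnT : n + 1 + d = T := by omega
    haveI : NeZero (m n) := ⟨by have := hm n; omega⟩
    rw [cyl_succ_union hm n x]
    rw [integral_iUnion (fun c => measurableSet_cyl _ _) (cyl_succ_disjoint n x)
      ((integrable_bdd μ (measurable_monomial e T) 1 (norm_monomial_le e T)).integrableOn)]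
    rw [tsum_fintype]
    rw [Finset.sum_congr rfl (fun c _ => ih (n + 1) hnT (Function.update x n c))]
    have hsplit : ∀ c : ZMod (m n),
        ∏ k ∈ Finset.range (n + 1), rade m k (Function.update x n c) ^ e k
          = (∏ k ∈ Finset.range n, rade m k x ^ e k)
            * Complex.exp (2 * Real.pi * Complex.I * ((c.val : ℕ) : ℂ) / (m n : ℂ)) ^ e n := by
      intro c
      rw [Finset.prod_range_succ]
      congr 1
      · apply Finset.prod_congr rfl
        intro k hk
        unfold rade
        rw [Function.update_of_ne (by have := Finset.mem_range.1 hk; omega) _ _]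
      · unfold rade
        rw [Function.update_self]
    rw [Finset.sum_congr rfl (fun c _ => by rw [hsplit c])]
    have hre : ∀ c : ZMod (m n),
        ((Mgen m (n + 1) : ℂ))⁻¹ * ((∏ k ∈ Finset.range n, rade m k x ^ e k)
            * Complex.exp (2 * Real.pi * Complex.I * ((c.val : ℕ) : ℂ) / (m n : ℂ)) ^ e n
            * ∏ k ∈ Finset.Ico (n + 1) T, (if m k ∣ e k then (1 : ℂ) else 0))
          = (((Mgen m (n + 1) : ℂ))⁻¹ * (∏ k ∈ Finset.range n, rade m k x ^ e k)
              * ∏ k ∈ Finset.Ico (n + 1) T, (if m k ∣ e k then (1 : ℂ) else 0))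
            * Complex.exp (2 * Real.pi * Complex.I * ((c.val : ℕ) : ℂ) / (m n : ℂ)) ^ e n :=
      fun c => by ring
    rw [Finset.sum_congr rfl (fun c _ => hre c), ← Finset.mul_sum]
    rw [zmod_charsum hm n (e n)]
    rw [Finset.prod_eq_prod_Ico_succ_bot (f := fun k => if m k ∣ e k then (1 : ℂ) else 0)
      (by omega : n < T)]
    have hmn : (m n : ℂ) ≠ 0 := Nat.cast_ne_zero.2 (by have := hm n; omega)
    have hMn : (Mgen m n : ℂ) ≠ 0 := Nat.cast_ne_zero.2 (Mgen_pos hm n).ne'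
    have hM1 : (Mgen m (n + 1) : ℂ) = (m n : ℂ) * (Mgen m n : ℂ) := by
      rw [Mgen_succ]; push_cast; ring
    by_cases hdvd : m n ∣ e n
    · rw [if_pos hdvd, if_pos hdvd, hM1]
      field_simp
    · rw [if_neg hdvd, if_neg hdvd]
      ring

end MeasureCore


section Derived
variable {m : ℕ → ℕ}

lemma exists_top (hm : ∀ k, 2 ≤ m k) {n i : ℕ} (h : Mgen m n ≤ i) :
    ∃ L, n ≤ L ∧ Mgen m L ≤ i ∧ i < Mgen m (L + 1) := by
  have hni : n ≤ i := le_trans (le_of_lt (lt_Mgen hm n)) h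
  set L := Nat.findGreatest (fun j => Mgen m j ≤ i) i with hL
  have hPL : Mgen m L ≤ i := Nat.findGreatest_spec (P := fun j => Mgen m j ≤ i) hni h
  have hnL : n ≤ L := Nat.le_findGreatest (P := fun j => Mgen m j ≤ i) hni h
  refine ⟨L, hnL, hPL, ?_⟩
  by_contra hcon
  push_neg at hcon
  have hL1 : L + 1 ≤ i := le_trans (le_of_lt (lt_Mgen hm (L + 1))) hcon
  have := Nat.le_findGreatest (P := fun j => Mgen m j ≤ i) hL1 hcon
  omega

lemma setIntegral_psi_lt (hm : ∀ k, 2 ≤ m k) (μ : Measure (Gm m))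
    (hμ : ∀ n x, μ (cyl m n x) = ((Mgen m n : ℝ≥0∞))⁻¹) {i n : ℕ} (h : i < Mgen m n) (x : Gm m) :
    ∫ y in cyl m n x, psi m i y ∂μ = (Mgen m n : ℂ)⁻¹ * psi m i x := by
  have hrw : ∀ y : Gm m, psi m i y = ∏ k ∈ Finset.range n, rade m k y ^ digit m i k :=
    fun y => psi_eq_prod hm h y
  simp only [hrw]
  rw [setIntegral_monomial μ hm hμ (digit m i) n 0 n (Nat.add_zero n) x]
  rw [Finset.Ico_self, Finset.prod_empty, mul_one]

lemma setIntegral_psi_ge (hm : ∀ k, 2 ≤ m k) (μ : Measure (Gm m))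
    (hμ : ∀ n x, μ (cyl m n x) = ((Mgen m n : ℝ≥0∞))⁻¹) {i n : ℕ} (h : Mgen m n ≤ i) (x : Gm m) :
    ∫ y in cyl m n x, psi m i y ∂μ = 0 := by
  have hi1 : i < Mgen m (i + 1) := lt_Mgen hm (i + 1) |>.trans_le' (by omega)
  have hrw : ∀ y : Gm m, psi m i y = ∏ k ∈ Finset.range (i + 1), rade m k y ^ digit m i k :=
    fun y => psi_eq_prod hm hi1 y
  simp only [hrw]
  have hni : n ≤ i := le_trans (le_of_lt (lt_Mgen hm n)) h
  rw [setIntegral_monomial μ hm hμ (digit m i) (i + 1) (i + 1 - n) n (by omega) x]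
  obtain ⟨L, hnL, hML, hML1⟩ := exists_top hm h
  have hLi : L ≤ i := le_trans (le_of_lt (lt_Mgen hm L)) hML
  have hdig : digit m i L = i / Mgen m L := by
    unfold digit
    apply Nat.mod_eq_of_lt
    rw [Nat.div_lt_iff_lt_mul (Mgen_pos hm L)]
    rw [Mgen_succ] at hML1
    omega
  have hpos : 0 < i / Mgen m L := Nat.one_le_div_iff (Mgen_pos hm L) |>.2 hML
  have hlt : i / Mgen m L < m L := by
    rw [Nat.div_lt_iff_lt_mul (Mgen_pos hm L)]
    rw [Mgen_succ] at hML1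
    omega
  have hnd : ¬ m L ∣ digit m i L := by
    rw [hdig]
    exact Nat.not_dvd_of_pos_of_lt hpos hlt
  have hzero : (∏ k ∈ Finset.Ico n (i + 1), if m k ∣ digit m i k then (1 : ℂ) else 0) = 0 :=
    Finset.prod_eq_zero (Finset.mem_Ico.2 ⟨hnL, by omega⟩) (if_neg hnd)
  rw [hzero]
  ring

lemma integral_psi_mul_conj (hm : ∀ k, 2 ≤ m k) (μ : Measure (Gm m))
    (hμ : ∀ n x, μ (cyl m n x) = ((Mgen m n : ℝ≥0∞))⁻¹) (i j : ℕ) :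
    ∫ x, psi m j x * (starRingEnd ℂ) (psi m i x) ∂μ = if j = i then 1 else 0 := by
  set T := max i j + 1 with hT
  have hjT : j < Mgen m T := lt_of_lt_of_le (by omega : j < T) (le_of_lt (lt_Mgen hm T))
  have hiT : i < Mgen m T := lt_of_lt_of_le (by omega : i < T) (le_of_lt (lt_Mgen hm T))
  set e : ℕ → ℕ := fun k => digit m j k + (m k - 1) * digit m i k with he
  have hrw : ∀ x : Gm m, psi m j x * (starRingEnd ℂ) (psi m i x)
      = ∏ k ∈ Finset.range T, rade m k x ^ e k := by
    intro x
    rw [psi_eq_prod hm hjT x, psi_eq_prod hm hiT x, map_prod]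
    rw [← Finset.prod_mul_distrib]
    apply Finset.prod_congr rfl
    intro k _
    rw [map_pow, conj_rade hm, ← pow_mul, ← pow_add]
  simp only [hrw]
  have h0 : (∫ x, (∏ k ∈ Finset.range T, rade m k x ^ e k) ∂μ)
      = ∫ x in cyl m 0 (fun k => (0 : ZMod (m k))), (∏ k ∈ Finset.range T, rade m k x ^ e k) ∂μ := by
    rw [cyl_zero, setIntegral_univ]
  rw [h0, setIntegral_monomial μ hm hμ e T T 0 (Nat.zero_add T) _]
  rw [Mgen_zero, Finset.range_zero, Finset.prod_empty]
  have hIco : Finset.Ico 0 T = Finset.range T := by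
    rw [Finset.range_eq_Ico]
  rw [hIco]
  simp only [Nat.cast_one, inv_one, one_mul]
  have hdvd_iff : ∀ k, (m k ∣ e k) ↔ digit m j k = digit m i k := by
    intro k
    have h1 := digit_lt hm j k
    have h2 := digit_lt hm i k
    have hmk := hm k
    constructor
    · intro hdvd
      obtain ⟨c, hc⟩ := hdvd
      rw [he] at hc
      simp only at hc
      have hcz : (digit m j k : ℤ) + ((m k : ℤ) - 1) * (digit m i k : ℤ) = (m k : ℤ) * c := by
        have := congrArg (Nat.cast : ℕ → ℤ) hc
        push_cast [Nat.cast_sub (by omega : 1 ≤ m k)] at this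
        linear_combination this
      have hdd : (m k : ℤ) ∣ (digit m j k : ℤ) - (digit m i k : ℤ) :=
        ⟨c - digit m i k, by linear_combination hcz⟩
      have habs : |(digit m j k : ℤ) - (digit m i k : ℤ)| < (m k : ℤ) := by
        rw [abs_sub_lt_iff]
        constructor <;> [push_cast; push_cast] <;> omega
      have := Int.eq_zero_of_abs_lt_dvd hdd habs
      omega
    · intro heq
      refine ⟨digit m i k, ?_⟩
      rw [he]
      simp only
      rw [heq]
      have : m k - 1 + 1 = m k := by omega
      calc digit m i k + (m k - 1) * digit m i k = (m k - 1 + 1) * digit m i k := by ring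
        _ = m k * digit m i k := by rw [this]
  by_cases hji : j = i
  · rw [if_pos hji]
    apply Finset.prod_eq_one
    intro k _
    rw [if_pos ((hdvd_iff k).2 (by rw [hji]))]
  · rw [if_neg hji]
    have : ¬ ∀ k < T, digit m j k = digit m i k := by
      intro hall
      exact hji (digit_inj hm hjT hiT hall)
    push_neg at this
    obtain ⟨k, hkT, hkne⟩ := this
    exact Finset.prod_eq_zero (Finset.mem_range.2 hkT)
      (if_neg (fun hdvd => hkne ((hdvd_iff k).1 hdvd)))

end Derived

/-- Given a strictly increasing sequence `(α_k)` of positive integers and nonnegative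
reals `(β_k)` with `Σ β_k^p < ∞`, the sequence `f^{(A)} = Σ_{α_k < A} β_k a_k`, where
`a_k = (M_{α_k}^{1/p-1}/λ)(D_{M_{α_k+1}} - D_{M_{α_k}})`, is a martingale, satisfies
`S_{M_A} a_k = a_k` for `α_k < A` and `S_{M_A} a_k = 0` for `α_k ≥ A`, and belongs
to `H_p(G_m)`. -/
theorem atomic_series_is_martingale_in_Hp
    (m : ℕ → ℕ) (hm : ∀ k, 2 ≤ m k) (lam : ℕ) (hlam : ∀ k, m k ≤ lam)
    (μ : Measure (Gm m)) (hμ : ∀ n x, μ (cyl m n x) = ((Mgen m n : ℝ≥0∞))⁻¹)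
    (p : ℝ) (hp0 : 0 < p) (hp1 : p < 1)
    (α : ℕ → ℕ) (hα : StrictMono α) (hα0 : ∀ k, 0 < α k)
    (β : ℕ → ℝ) (hβ : ∀ k, 0 ≤ β k) (hsum : Summable fun k => β k ^ p) :
    let a : ℕ → Gm m → ℂ := fun k x =>
      (((Mgen m (α k) : ℝ) ^ (1 / p - 1) / (lam : ℝ) : ℝ) : ℂ) *
        (Dker m (Mgen m (α k + 1)) x - Dker m (Mgen m (α k)) x)
    let f : ℕ → Gm m → ℂ := fun A x =>
      ∑ k ∈ (Finset.range A).filter (fun k => α k < A), (β k : ℂ) * a k x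
    IsVMartingale m μ f ∧
    (∀ A k : ℕ, ∀ x : Gm m,
      Spart m μ (a k) (Mgen m A) x = if α k < A then a k x else 0) ∧
    HpNorm m μ p f < ⊤ := by
  intro a f
  haveI : IsFiniteMeasure μ := gm_isFiniteMeasure μ hμ
  have hlam1 : (1 : ℝ) ≤ (lam : ℝ) := by
    have := le_trans (hm 0) (hlam 0); exact_mod_cast by omega
  have hlam0 : (lam : ℝ) ≠ 0 := by linarith
  have hMpos : ∀ n, 0 < Mgen m n := Mgen_pos hm
  -- the scalar constant
  set Ck : ℕ → ℂ := fun k => ((Mgen m (α k) : ℝ) ^ (1 / p - 1) / (lam : ℝ) : ℝ) with hCk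
  have ha : ∀ k x, a k x = Ck k *
      (Dker m (Mgen m (α k + 1)) x - Dker m (Mgen m (α k)) x) := fun k x => rfl
  have hf : ∀ A x, f A x = ∑ k ∈ (Finset.range A).filter (fun k => α k < A),
      (β k : ℂ) * a k x := fun A x => rfl
  have hIcoD : ∀ k (x : Gm m), Dker m (Mgen m (α k + 1)) x - Dker m (Mgen m (α k)) x
      = ∑ j ∈ Finset.Ico (Mgen m (α k)) (Mgen m (α k + 1)), psi m j x := by
    intro k x
    rw [Finset.sum_Ico_eq_sub _ (Mgen_mono hm (Nat.le_succ _))]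
    rfl
  have ha' : ∀ k x, a k x = Ck k *
      ∑ j ∈ Finset.Ico (Mgen m (α k)) (Mgen m (α k + 1)), psi m j x := by
    intro k x
    rw [ha, hIcoD]
  -- measurability / integrability of the atoms
  have hameas : ∀ k, Measurable (a k) := by
    intro k
    have : a k = fun x => Ck k *
        ∑ j ∈ Finset.Ico (Mgen m (α k)) (Mgen m (α k + 1)), psi m j x := funext (ha' k)
    rw [this]
    exact (Finset.measurable_sum _ (fun j _ => measurable_psi j)).const_mul _
  have haint : ∀ k, Integrable (a k) μ := by
    intro k
    have : a k = fun x => Ck k *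
        ∑ j ∈ Finset.Ico (Mgen m (α k)) (Mgen m (α k + 1)), psi m j x := funext (ha' k)
    rw [this]
    exact (integrable_finset_sum _ (fun j _ => integrable_psi μ j)).const_mul _
  -- Fourier coefficients of the atoms
  have hfcoef : ∀ k i, fcoef m μ (a k) i =
      if i ∈ Finset.Ico (Mgen m (α k)) (Mgen m (α k + 1)) then Ck k else 0 := by
    intro k i
    unfold fcoef
    have hrw : ∀ x : Gm m, a k x * (starRingEnd ℂ) (psi m i x)
        = ∑ j ∈ Finset.Ico (Mgen m (α k)) (Mgen m (α k + 1)),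
            Ck k * (psi m j x * (starRingEnd ℂ) (psi m i x)) := by
      intro x
      rw [ha' k x, mul_assoc, Finset.sum_mul, Finset.mul_sum]
    simp only [hrw]
    rw [integral_finset_sum _ (fun j _ => by
      refine Integrable.const_mul ?_ _
      refine integrable_bdd μ ((measurable_psi j).mul
        ((continuous_star.measurable).comp (measurable_psi i))) 1 (fun x => ?_)
      rw [norm_mul, RCLike.norm_conj, norm_psi, norm_psi, one_mul])]
    rw [Finset.sum_congr rfl (fun j _ => by
      rw [MeasureTheory.integral_const_mul, integral_psi_mul_conj hm μ hμ i j,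
        mul_ite, mul_one, mul_zero])]
    rw [Finset.sum_ite_eq' _ i (fun _ => Ck k)]
  -- the partial-sum statement
  have hSpart : ∀ A k : ℕ, ∀ x : Gm m,
      Spart m μ (a k) (Mgen m A) x = if α k < A then a k x else 0 := by
    intro A k x
    unfold Spart
    rw [Finset.sum_congr rfl (fun i _ => by rw [hfcoef k i, ite_mul, zero_mul])]
    rw [Finset.sum_ite_mem]
    by_cases hA : α k < A
    · rw [if_pos hA]
      have hsub : Finset.Ico (Mgen m (α k)) (Mgen m (α k + 1)) ⊆ Finset.range (Mgen m A) := by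
        intro i hi
        rw [Finset.mem_Ico] at hi
        rw [Finset.mem_range]
        exact lt_of_lt_of_le hi.2 (Mgen_mono hm hA)
      rw [Finset.inter_eq_right.2 hsub]
      rw [ha' k x, Finset.mul_sum]
    · rw [if_neg hA]
      have hempty : Finset.range (Mgen m A) ∩ Finset.Ico (Mgen m (α k)) (Mgen m (α k + 1))
          = ∅ := by
        apply Finset.eq_empty_of_forall_notMem
        intro i hi
        simp only [Finset.mem_inter, Finset.mem_range, Finset.mem_Ico] at hi
        have : Mgen m A ≤ Mgen m (α k) := Mgen_mono hm (by omega)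
        omega
      rw [hempty, Finset.sum_empty]
  -- integral of atoms over cylinders
  have hcylint : ∀ (n : ℕ) (x : Gm m) (k : ℕ), ∫ y in cyl m n x, a k y ∂μ
      = if α k < n then (Mgen m n : ℂ)⁻¹ * a k x else 0 := by
    intro n x k
    simp only [ha']
    rw [MeasureTheory.integral_const_mul]
    rw [integral_finset_sum _ (fun j _ => (integrable_psi μ j).restrict)]
    by_cases hk : α k < n
    · rw [if_pos hk]
      rw [Finset.sum_congr rfl (fun j hj => by
        refine setIntegral_psi_lt hm μ hμ ?_ x
        rw [Finset.mem_Ico] at hj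
        exact lt_of_lt_of_le hj.2 (Mgen_mono hm hk))]
      rw [← Finset.mul_sum]
      ring
    · rw [if_neg hk]
      rw [Finset.sum_congr rfl (fun j hj => by
        refine setIntegral_psi_ge hm μ hμ ?_ x
        rw [Finset.mem_Ico] at hj
        exact le_trans (Mgen_mono hm (by omega)) hj.1)]
      rw [Finset.sum_const, smul_zero, mul_zero]
  refine ⟨⟨?_, ?_⟩, hSpart, ?_⟩
  · -- integrability of the martingale
    intro A
    have : f A = fun x => ∑ k ∈ (Finset.range A).filter (fun k => α k < A),
        (β k : ℂ) * a k x := funext (hf A)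
    rw [this]
    exact integrable_finset_sum _ (fun k _ => (haint k).const_mul _)
  · -- the martingale property
    intro n A hnA x
    have hMne : (Mgen m n : ℂ) ≠ 0 := Nat.cast_ne_zero.2 (hMpos n).ne'
    have hset : ((Finset.range A).filter (fun k => α k < A)).filter (fun k => α k < n)
        = (Finset.range n).filter (fun k => α k < n) := by
      ext k
      simp only [Finset.mem_filter, Finset.mem_range]
      have hk : k ≤ α k := hα.le_apply
      omega
    have h1 : ∫ t in cyl m n x, f A t ∂μ
        = ∑ k ∈ (Finset.range A).filter (fun k => α k < A),
            (β k : ℂ) * (if α k < n then (Mgen m n : ℂ)⁻¹ * a k x else 0) := by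
      simp only [hf]
      rw [integral_finset_sum _ (fun k _ => ((haint k).const_mul _).restrict)]
      exact Finset.sum_congr rfl (fun k _ => by
        rw [MeasureTheory.integral_const_mul, hcylint n x k])
    have key : (Mgen m n : ℂ) * ∫ t in cyl m n x, f A t ∂μ = f n x := by
      rw [h1, Finset.mul_sum]
      rw [Finset.sum_congr rfl (fun k _ => show
          (Mgen m n : ℂ) * ((β k : ℂ) * if α k < n then (Mgen m n : ℂ)⁻¹ * a k x else 0)
            = if α k < n then (β k : ℂ) * a k x else 0 by
        by_cases hk : α k < n
        · rw [if_pos hk, if_pos hk]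
          field_simp
        · rw [if_neg hk, if_neg hk, mul_zero, mul_zero])]
      rw [← Finset.sum_filter, hset, hf n x]
    exact key.symm
  · -- the Hp bound
    show (∫⁻ x, (⨆ n, (‖f n x‖₊ : ℝ≥0∞)) ^ p ∂μ) ^ (1 / p) < ⊤
    set z : Gm m := fun k => (0 : ZMod (m k)) with hz
    have hMcast : ∀ k, (0 : ℝ) < (Mgen m (α k) : ℝ) := fun k => by exact_mod_cast hMpos (α k)
    have hDle : ∀ (n : ℕ) (x : Gm m), ‖Dker m (Mgen m n) x‖ ≤ (Mgen m n : ℝ) := by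
      intro n x
      rw [Dker_Mgen hm n x]
      by_cases h : ∀ j < n, x j = 0
      · rw [if_pos h, Complex.norm_natCast]
      · rw [if_neg h, norm_zero]
        positivity
    have hCknorm : ∀ k, ‖Ck k‖ = (Mgen m (α k) : ℝ) ^ (1 / p - 1) / (lam : ℝ) := by
      intro k
      rw [hCk]
      simp only
      rw [Complex.norm_real, Real.norm_eq_abs]
      exact abs_of_nonneg (div_nonneg (Real.rpow_nonneg (le_of_lt (hMcast k)) _) (by positivity))
    have hna : ∀ k x, ‖a k x‖ ≤ 2 * (Mgen m (α k) : ℝ) ^ (1 / p) := by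
      intro k x
      rw [ha, norm_mul, hCknorm]
      have h1 : ‖Dker m (Mgen m (α k + 1)) x - Dker m (Mgen m (α k)) x‖
          ≤ (Mgen m (α k + 1) : ℝ) + (Mgen m (α k) : ℝ) :=
        le_trans (norm_sub_le _ _) (add_le_add (hDle _ x) (hDle _ x))
      have h2 : (Mgen m (α k + 1) : ℝ) ≤ (lam : ℝ) * (Mgen m (α k) : ℝ) := by
        rw [Mgen_succ]
        push_cast
        exact mul_le_mul_of_nonneg_right (by exact_mod_cast hlam (α k)) (le_of_lt (hMcast k))
      have h3 : (Mgen m (α k) : ℝ) ≤ (lam : ℝ) * (Mgen m (α k) : ℝ) :=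
        le_mul_of_one_le_left (le_of_lt (hMcast k)) hlam1
      have h4 : ‖Dker m (Mgen m (α k + 1)) x - Dker m (Mgen m (α k)) x‖
          ≤ 2 * (lam : ℝ) * (Mgen m (α k) : ℝ) := by linarith
      have h5 : (Mgen m (α k) : ℝ) ^ (1 / p - 1) * (Mgen m (α k) : ℝ)
          = (Mgen m (α k) : ℝ) ^ (1 / p) := by
        rw [← Real.rpow_add_one (hMcast k).ne']
        norm_num
      calc (Mgen m (α k) : ℝ) ^ (1 / p - 1) / (lam : ℝ)
            * ‖Dker m (Mgen m (α k + 1)) x - Dker m (Mgen m (α k)) x‖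
          ≤ (Mgen m (α k) : ℝ) ^ (1 / p - 1) / (lam : ℝ)
            * (2 * (lam : ℝ) * (Mgen m (α k) : ℝ)) := by
            apply mul_le_mul_of_nonneg_left h4
            positivity
        _ = 2 * ((Mgen m (α k) : ℝ) ^ (1 / p - 1) * (Mgen m (α k) : ℝ)) := by
            field_simp
        _ = 2 * (Mgen m (α k) : ℝ) ^ (1 / p) := by rw [h5]
    have hsupp : ∀ k x, x ∉ cyl m (α k) z → a k x = 0 := by
      intro k x hx
      have hx' : ¬ ∀ j < α k, x j = 0 := by
        intro hall
        exact hx (fun j hj => hall j hj)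
      rw [ha, Dker_Mgen hm, Dker_Mgen hm]
      rw [if_neg (show ¬ ∀ j < α k + 1, x j = 0 from
        fun h => hx' (fun j hj => h j (Nat.lt_succ_of_lt hj))), if_neg hx']
      ring
    have hrpm : ∀ X : ℝ≥0∞, (X ^ (1 / p)) ^ p = X := by
      intro X
      rw [← ENNReal.rpow_mul, one_div, inv_mul_cancel₀ hp0.ne', ENNReal.rpow_one]
    have hrpm' : ∀ X : ℝ≥0∞, (X ^ p) ^ (1 / p) = X := by
      intro X
      rw [← ENNReal.rpow_mul, one_div, mul_inv_cancel₀ hp0.ne', ENNReal.rpow_one]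
    have hfinpow : ∀ (s : Finset ℕ) (t : ℕ → ℝ≥0∞), (∑ i ∈ s, t i) ^ p ≤ ∑ i ∈ s, t i ^ p := by
      intro s t
      induction s using Finset.induction with
      | empty => simp [ENNReal.zero_rpow_of_pos hp0]
      | insert _ _ hnotmem ih =>
        rw [Finset.sum_insert hnotmem, Finset.sum_insert hnotmem]
        exact le_trans (ENNReal.rpow_add_le_add_rpow _ _ hp0.le hp1.le) (add_le_add le_rfl ih)
    set g : ℕ → Gm m → ℝ≥0∞ := fun k x => ((‖(β k : ℂ) * a k x‖₊ : ℝ≥0∞)) ^ p with hg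
    have hpt : ∀ x, (⨆ A, (‖f A x‖₊ : ℝ≥0∞)) ^ p ≤ ∑' k, g k x := by
      intro x
      have hle : (⨆ A, (‖f A x‖₊ : ℝ≥0∞)) ≤ (∑' k, g k x) ^ (1 / p) := by
        apply iSup_le
        intro A
        have h1 : (‖f A x‖₊ : ℝ≥0∞) ≤ ∑ k ∈ (Finset.range A).filter (fun k => α k < A),
            (‖(β k : ℂ) * a k x‖₊ : ℝ≥0∞) := by
          rw [hf]
          exact le_trans (ENNReal.coe_le_coe.2 (nnnorm_sum_le _ _))
            (le_of_eq (ENNReal.coe_finset_sum _ _))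
        calc (‖f A x‖₊ : ℝ≥0∞)
            ≤ ∑ k ∈ (Finset.range A).filter (fun k => α k < A),
              (‖(β k : ℂ) * a k x‖₊ : ℝ≥0∞) := h1
          _ = ((∑ k ∈ (Finset.range A).filter (fun k => α k < A),
              (‖(β k : ℂ) * a k x‖₊ : ℝ≥0∞)) ^ p) ^ (1 / p) := (hrpm' _).symm
          _ ≤ (∑' k, g k x) ^ (1 / p) := by
              apply ENNReal.rpow_le_rpow _ (by positivity)
              exact le_trans (hfinpow _ _) (ENNReal.sum_le_tsum _)
      calc (⨆ A, (‖f A x‖₊ : ℝ≥0∞)) ^ p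
          ≤ ((∑' k, g k x) ^ (1 / p)) ^ p := ENNReal.rpow_le_rpow hle hp0.le
        _ = ∑' k, g k x := hrpm _
    have hgmeas : ∀ k, Measurable (g k) := fun k =>
      (((hameas k).const_mul ((β k : ℂ))).enorm).pow_const p
    have hgint : ∀ k, ∫⁻ x, g k x ∂μ ≤ ENNReal.ofReal (β k ^ p) * 2 := by
      intro k
      have hsplitg : ∀ x, g k x = ENNReal.ofReal (β k ^ p) * (‖a k x‖₊ : ℝ≥0∞) ^ p := by
        intro x
        rw [hg]
        simp only
        rw [nnnorm_mul, ENNReal.coe_mul, ENNReal.mul_rpow_of_nonneg _ _ hp0.le]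
        congr 1
        rw [← enorm_eq_nnnorm, ← ofReal_norm, Complex.norm_real, Real.norm_eq_abs,
          abs_of_nonneg (hβ k), ENNReal.ofReal_rpow_of_nonneg (hβ k) hp0.le]
      rw [lintegral_congr hsplitg, lintegral_const_mul' _ _ ENNReal.ofReal_ne_top]
      apply mul_le_mul' le_rfl
      have hptk : ∀ x, (‖a k x‖₊ : ℝ≥0∞) ^ p ≤ (cyl m (α k) z).indicator
          (fun _ => ENNReal.ofReal (2 ^ p * (Mgen m (α k) : ℝ))) x := by
        intro x
        by_cases hx : x ∈ cyl m (α k) z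
        · rw [Set.indicator_of_mem hx]
          rw [← enorm_eq_nnnorm, ← ofReal_norm, ENNReal.ofReal_rpow_of_nonneg (norm_nonneg _) hp0.le]
          apply ENNReal.ofReal_le_ofReal
          have h6 : ‖a k x‖ ^ p ≤ (2 * (Mgen m (α k) : ℝ) ^ (1 / p)) ^ p :=
            Real.rpow_le_rpow (norm_nonneg _) (hna k x) hp0.le
          refine le_trans h6 (le_of_eq ?_)
          rw [Real.mul_rpow (by norm_num) (Real.rpow_nonneg (le_of_lt (hMcast k)) _)]
          congr 1
          rw [one_div, Real.rpow_inv_rpow (le_of_lt (hMcast k)) hp0.ne']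
        · rw [Set.indicator_of_notMem hx, hsupp k x hx]
          simp [ENNReal.zero_rpow_of_pos hp0]
      calc ∫⁻ x, (‖a k x‖₊ : ℝ≥0∞) ^ p ∂μ
          ≤ ∫⁻ x, (cyl m (α k) z).indicator
              (fun _ => ENNReal.ofReal (2 ^ p * (Mgen m (α k) : ℝ))) x ∂μ :=
            lintegral_mono hptk
        _ = ENNReal.ofReal (2 ^ p * (Mgen m (α k) : ℝ)) * μ (cyl m (α k) z) :=
            lintegral_indicator_const (measurableSet_cyl _ _) _
        _ = ENNReal.ofReal (2 ^ p) * ((Mgen m (α k) : ℝ≥0∞) * (Mgen m (α k) : ℝ≥0∞)⁻¹) := by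
            rw [hμ, ENNReal.ofReal_mul (by positivity), ENNReal.ofReal_natCast, mul_assoc]
        _ = ENNReal.ofReal (2 ^ p) := by
            rw [ENNReal.mul_inv_cancel (Nat.cast_ne_zero.2 (hMpos (α k)).ne')
              (ENNReal.natCast_ne_top _), mul_one]
        _ ≤ 2 := by
            have h7 : (2 : ℝ) ^ p ≤ 2 := by
              calc (2 : ℝ) ^ p ≤ (2 : ℝ) ^ (1 : ℝ) :=
                Real.rpow_le_rpow_of_exponent_le one_le_two hp1.le
                _ = 2 := Real.rpow_one 2
            calc ENNReal.ofReal (2 ^ p) ≤ ENNReal.ofReal 2 := ENNReal.ofReal_le_ofReal h7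
              _ = 2 := by norm_num
    have hC : (∑' k, ENNReal.ofReal (β k ^ p) * 2) < ⊤ := by
      rw [ENNReal.tsum_mul_right]
      have h8 : (∑' k, ENNReal.ofReal (β k ^ p)) ≠ ⊤ := by
        rw [← ENNReal.ofReal_tsum_of_nonneg (fun k => Real.rpow_nonneg (hβ k) p) hsum]
        exact ENNReal.ofReal_ne_top
      exact ENNReal.mul_lt_top h8.lt_top (by norm_num)
    have hmain : ∫⁻ x, (⨆ A, (‖f A x‖₊ : ℝ≥0∞)) ^ p ∂μ
        ≤ ∑' k, ENNReal.ofReal (β k ^ p) * 2 := by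
      calc ∫⁻ x, (⨆ A, (‖f A x‖₊ : ℝ≥0∞)) ^ p ∂μ
          ≤ ∫⁻ x, ∑' k, g k x ∂μ := lintegral_mono hpt
        _ = ∑' k, ∫⁻ x, g k x ∂μ := lintegral_tsum (fun k => (hgmeas k).aemeasurable)
        _ ≤ ∑' k, ENNReal.ofReal (β k ^ p) * 2 := ENNReal.tsum_le_tsum hgint
    calc (∫⁻ x, (⨆ A, (‖f A x‖₊ : ℝ≥0∞)) ^ p ∂μ) ^ (1 / p)
        ≤ (∑' k, ENNReal.ofReal (β k ^ p) * 2) ^ (1 / p) :=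
          ENNReal.rpow_le_rpow hmain (by positivity)
      _ < ⊤ := ENNReal.rpow_lt_top_of_nonneg (by positivity) hC.ne

end
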